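/- Let G' be a finite grid and G the grid obtained by merging two adjacent columns of G'. Let Z' = (X',Y') be a random variable on the cells of G' and Z = (X,Y) the induced variable on the cells of G. Then |I(Z') − I(Z)| ≤ π · H_b(ν/π), where ν is the probability mass of one of the two merged columns and π = Pr[X lies in the merged column]. -/

import Mathlib

open Real Finset

/-- Shannon entropy of a finitely supported distribution. -/
noncomputable def Hfin {α : Type*} [Fintype α] (p : α → ℝ) : ℝ := ∑ i, Real.negMulLog (p i)

/-- Discrete mutual information of a joint distribution on a finite grid:
`I(X,Y) = H(X) + H(Y) - H(X,Y)`. -/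
noncomputable def MIfin {α β : Type*} [Fintype α] [Fintype β] (p : α × β → ℝ) : ℝ :=
  Hfin (fun a => ∑ b, p (a, b)) + Hfin (fun b => ∑ a, p (a, b)) - Hfin p


/-- Merging the two adjacent columns `c.castSucc` and `c.succ` of a joint distribution on
`(k+1)` columns and `l` rows changes the mutual information by at most `π H_b(ν/π)`, where
`ν` is the mass of one merged column and `π` the mass of the merged column. -/

noncomputable def Gg (x y : ℝ) : ℝ :=
  Real.negMulLog x + Real.negMulLog y - Real.negMulLog (x + y)

lemma Gg_eq {x y : ℝ} (hx : 0 ≤ x) (hy : 0 ≤ y) :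
    Gg x y = x * Real.log ((x + y) / x) + y * Real.log ((x + y) / y) := by
  unfold Gg
  rcases hx.eq_or_lt with rfl | hx
  · rcases hy.eq_or_lt with rfl | hy
    · simp
    · simp [Real.negMulLog, div_self hy.ne']
  · rcases hy.eq_or_lt with rfl | hy
    · simp [Real.negMulLog, div_self hx.ne']
    · rw [Real.log_div (by positivity) hx.ne', Real.log_div (by positivity) hy.ne']
      simp only [Real.negMulLog]
      ring

lemma Gg_nonneg {x y : ℝ} (hx : 0 ≤ x) (hy : 0 ≤ y) : 0 ≤ Gg x y := by
  rw [Gg_eq hx hy]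
  have h1 : ∀ a b : ℝ, 0 ≤ a → 0 ≤ b → 0 ≤ a * Real.log ((a + b) / a) := by
    intro a b ha hb
    rcases ha.eq_or_lt with rfl | ha
    · simp
    · exact mul_nonneg ha.le (Real.log_nonneg ((one_le_div ha).mpr (by linarith)))
  have := h1 x y hx hy
  have h2 := h1 y x hy hx
  rw [add_comm y x] at h2
  linarith

lemma jensen_log {a b c d : ℝ} (ha : 0 ≤ a) (hb : 0 ≤ b) (hc : 0 ≤ c) (hd : 0 ≤ d) :
    a * Real.log ((a + b) / a) + c * Real.log ((c + d) / c)
      ≤ (a + c) * Real.log ((a + b + c + d) / (a + c)) := by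
  rcases ha.eq_or_lt with rfl | ha
  · simp only [zero_add, zero_mul]
    rcases hc.eq_or_lt with rfl | hc
    · simp
    · apply mul_le_mul_of_nonneg_left _ hc.le
      apply Real.log_le_log (by positivity)
      apply div_le_div_of_nonneg_right ?_ hc.le  -- (c+d)/c ≤ (b+c+d)/c
      linarith
  · rcases hc.eq_or_lt with rfl | hc
    · simp only [add_zero, zero_mul, add_zero]
      apply mul_le_mul_of_nonneg_left _ ha.le
      apply Real.log_le_log (by positivity)
      apply div_le_div_of_nonneg_right ?_ ha.le
      linarith
    · have hac : (0:ℝ) < a + c := by linarith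
      have key := (strictConcaveOn_log_Ioi.concaveOn).2
        (Set.mem_Ioi.mpr (show (0:ℝ) < (a + b) / a by positivity))
        (Set.mem_Ioi.mpr (show (0:ℝ) < (c + d) / c by positivity))
        (show (0:ℝ) ≤ a / (a + c) by positivity)
        (show (0:ℝ) ≤ c / (a + c) by positivity)
        (by field_simp : a / (a + c) + c / (a + c) = 1)
      simp only [smul_eq_mul] at key
      have e1 : a / (a + c) * ((a + b) / a) + c / (a + c) * ((c + d) / c)
          = (a + b + c + d) / (a + c) := by field_simp; ring
      rw [e1] at key
      have := mul_le_mul_of_nonneg_left key hac.le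
      calc a * Real.log ((a + b) / a) + c * Real.log ((c + d) / c)
          = (a + c) * (a / (a + c) * Real.log ((a + b) / a)
              + c / (a + c) * Real.log ((c + d) / c)) := by field_simp
        _ ≤ (a + c) * Real.log ((a + b + c + d) / (a + c)) := this

lemma Gg_superadd {a b c d : ℝ} (ha : 0 ≤ a) (hb : 0 ≤ b) (hc : 0 ≤ c) (hd : 0 ≤ d) :
    Gg a b + Gg c d ≤ Gg (a + c) (b + d) := by
  rw [Gg_eq ha hb, Gg_eq hc hd, Gg_eq (by linarith) (by linarith)]
  have h1 := jensen_log ha hb hc hd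
  have h2 := jensen_log hb ha hd hc
  have e1 : b + a + d + c = a + b + c + d := by ring
  have e2 : b + a = a + b := by ring
  have e3 : d + c = c + d := by ring
  rw [e1, e2, e3] at h2
  have e4 : a + c + (b + d) = a + b + c + d := by ring
  rw [e4]
  linarith

lemma Gg_sum {ι : Type*} [DecidableEq ι] (s : Finset ι) (f1 f2 : ι → ℝ)
    (h1 : ∀ i ∈ s, 0 ≤ f1 i) (h2 : ∀ i ∈ s, 0 ≤ f2 i) :
    ∑ i ∈ s, Gg (f1 i) (f2 i) ≤ Gg (∑ i ∈ s, f1 i) (∑ i ∈ s, f2 i) := by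
  induction s using Finset.induction with
  | empty => simp [Gg]
  | @insert a s ha ih =>
    rw [Finset.sum_insert ha, Finset.sum_insert ha, Finset.sum_insert ha]
    have ih' := ih (fun i hi => h1 i (Finset.mem_insert_of_mem hi))
      (fun i hi => h2 i (Finset.mem_insert_of_mem hi))
    calc Gg (f1 a) (f2 a) + ∑ i ∈ s, Gg (f1 i) (f2 i)
        ≤ Gg (f1 a) (f2 a) + Gg (∑ i ∈ s, f1 i) (∑ i ∈ s, f2 i) := by linarith
      _ ≤ Gg (f1 a + ∑ i ∈ s, f1 i) (f2 a + ∑ i ∈ s, f2 i) :=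
          Gg_superadd (h1 a (Finset.mem_insert_self a s))
            (h2 a (Finset.mem_insert_self a s))
            (Finset.sum_nonneg fun i hi => h1 i (Finset.mem_insert_of_mem hi))
            (Finset.sum_nonneg fun i hi => h2 i (Finset.mem_insert_of_mem hi))

lemma Gg_binEntropy {x y : ℝ} (hx : 0 ≤ x) (hy : 0 ≤ y) :
    Gg x y = (x + y) * Real.binEntropy (x / (x + y)) := by
  rcases hx.eq_or_lt with rfl | hx
  · rcases hy.eq_or_lt with rfl | hy
    · simp [Gg]
    · simp [Gg, Real.negMulLog]
  · rcases hy.eq_or_lt with rfl | hy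
    · simp [Gg, Real.negMulLog, div_self hx.ne']
    · have hxy : (0:ℝ) < x + y := by linarith
      rw [Real.binEntropy_eq_negMulLog_add_negMulLog_one_sub]
      have h1 : 1 - x / (x + y) = y / (x + y) := by field_simp; ring
      rw [h1]
      unfold Gg Real.negMulLog
      rw [Real.log_div hx.ne' hxy.ne', Real.log_div hy.ne' hxy.ne']
      field_simp
      ring

theorem stmt5 (k l : ℕ) (c : Fin k) (p : Fin (k + 1) × Fin l → ℝ)
    (hp0 : ∀ z, 0 ≤ p z) (hpsum : ∑ z, p z = 1) :
    |MIfin p -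
        MIfin (fun z : Fin k × Fin l =>
          ∑ i : Fin (k + 1), if c.predAbove i = z.1 then p (i, z.2) else 0)|
      ≤ (∑ j, p (c.castSucc, j) + ∑ j, p (c.succ, j)) *
          Real.binEntropy
            ((∑ j, p (c.castSucc, j)) /
              (∑ j, p (c.castSucc, j) + ∑ j, p (c.succ, j))) := by
  classical
  set q : Fin k × Fin l → ℝ := fun z =>
    ∑ i : Fin (k + 1), if c.predAbove i = z.1 then p (i, z.2) else 0 with hq
  set E : Fin k → Fin (k + 1) := (c.castSucc).succAbove with hE
  have hEc : E c = c.succ := Fin.succAbove_castSucc_self c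
  -- q in closed form
  have hqeq : ∀ a j, q (a, j) =
      (if a = c then p (c.castSucc, j) else 0) + p (E a, j) := by
    intro a j
    rw [hq]
    simp only
    rw [Fin.sum_univ_succAbove
      (fun i => if c.predAbove i = a then p (i, j) else 0) c.castSucc]
    simp only [Fin.predAbove_castSucc_self, Fin.predAbove_succAbove]
    rw [Finset.sum_ite_eq' Finset.univ a (fun i => p (E i, j))]
    simp [eq_comm]
  -- the split-off-one-index trick
  have split : ∀ (f : Fin (k + 1) → ℝ),
      ∑ i, f i = f c.castSucc + ∑ a, f (E a) := fun f =>
    Fin.sum_univ_succAbove f c.castSucc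
  have key : ∀ (F : Fin k → ℝ) (G : Fin k → ℝ),
      ∑ a, (F a) = ∑ a, (G a) + (F c - G c) ∨ True := fun _ _ => Or.inr trivial
  -- difference of sums that agree except at c
  have diff_at_c : ∀ (F G : Fin k → ℝ), (∀ a, a ≠ c → F a = G a) →
      ∑ a, F a = ∑ a, G a + (F c - G c) := by
    intro F G h
    have : ∀ a, F a = G a + (if a = c then F c - G c else 0) := by
      intro a
      by_cases ha : a = c
      · subst ha; simp
      · simp [ha, h a ha]
    calc ∑ a, F a = ∑ a, (G a + (if a = c then F c - G c else 0)) := by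
          exact Finset.sum_congr rfl fun a _ => this a
      _ = ∑ a, G a + (F c - G c) := by
          rw [Finset.sum_add_distrib, Finset.sum_ite_eq' Finset.univ c]
          simp
  -- abbreviations
  set ν1 : Fin l → ℝ := fun j => p (c.castSucc, j) with hν1
  set ν2 : Fin l → ℝ := fun j => p (c.succ, j) with hν2
  -- joint entropy difference
  have hXY : Hfin p - Hfin q = ∑ j, Gg (ν1 j) (ν2 j) := by
    have hp' : Hfin p = ∑ j, Real.negMulLog (p (c.castSucc, j))
        + ∑ a, ∑ j, Real.negMulLog (p (E a, j)) := by
      unfold Hfin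
      rw [Fintype.sum_prod_type]
      exact split (fun i => ∑ j, Real.negMulLog (p (i, j)))
    have hq' : Hfin q = ∑ a, ∑ j, Real.negMulLog (p (E a, j))
        + (∑ j, Real.negMulLog (ν1 j + ν2 j) - ∑ j, Real.negMulLog (p (E c, j))) := by
      unfold Hfin
      rw [Fintype.sum_prod_type]
      have : ∀ a : Fin k, ∑ j, Real.negMulLog (q (a, j)) =
          (fun a => ∑ j, Real.negMulLog (q (a, j))) a := fun _ => rfl
      refine (diff_at_c (fun a => ∑ j, Real.negMulLog (q (a, j)))
        (fun a => ∑ j, Real.negMulLog (p (E a, j))) ?_).trans ?_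
      · intro a ha
        refine Finset.sum_congr rfl fun j _ => ?_
        rw [hqeq a j, if_neg ha, zero_add]
      · congr 1
        rw [← Finset.sum_sub_distrib]
        rw [Finset.sum_sub_distrib]
        congr 1
        refine Finset.sum_congr rfl fun j _ => ?_
        rw [hqeq c j, if_pos rfl, hEc]
    rw [hp', hq', hEc]
    unfold Gg
    rw [Finset.sum_sub_distrib, Finset.sum_add_distrib]
    ring
  -- X-marginal entropy difference
  have hX : Hfin (fun i => ∑ j, p (i, j)) - Hfin (fun a => ∑ j, q (a, j))
      = Gg (∑ j, ν1 j) (∑ j, ν2 j) := by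
    have hqX : ∀ a : Fin k, ∑ j, q (a, j) =
        (if a = c then ∑ j, ν1 j else 0) + ∑ j, p (E a, j) := by
      intro a
      calc ∑ j, q (a, j)
          = ∑ j, ((if a = c then p (c.castSucc, j) else 0) + p (E a, j)) :=
            Finset.sum_congr rfl fun j _ => hqeq a j
        _ = (if a = c then ∑ j, ν1 j else 0) + ∑ j, p (E a, j) := by
            rw [Finset.sum_add_distrib]
            congr 1
            by_cases ha : a = c <;> simp [ha, hν1]
    have hp' : Hfin (fun i => ∑ j, p (i, j))
        = Real.negMulLog (∑ j, ν1 j)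
          + ∑ a, Real.negMulLog (∑ j, p (E a, j)) := by
      unfold Hfin
      exact split (fun i => Real.negMulLog (∑ j, p (i, j)))
    have hq' : Hfin (fun a => ∑ j, q (a, j))
        = ∑ a, Real.negMulLog (∑ j, p (E a, j))
          + (Real.negMulLog (∑ j, ν1 j + ∑ j, p (E c, j))
             - Real.negMulLog (∑ j, p (E c, j))) := by
      unfold Hfin
      refine (diff_at_c (fun a => Real.negMulLog (∑ j, q (a, j)))
        (fun a => Real.negMulLog (∑ j, p (E a, j))) ?_).trans ?_
      · intro a ha
        simp only [hqX a, if_neg ha, zero_add]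
      · congr 2
        simp [hqX c]
    rw [hp', hq', hEc]
    unfold Gg
    have : (∑ j, ν1 j) + ∑ j, p (c.succ, j) = ∑ j, ν1 j + ∑ j, ν2 j := rfl
    rw [this]
    ring
  -- Y-marginals agree
  have hY : (fun j : Fin l => ∑ a, q (a, j)) = (fun j => ∑ i, p (i, j)) := by
    funext j
    rw [split (fun i => p (i, j))]
    calc ∑ a, q (a, j)
        = ∑ a, ((if a = c then p (c.castSucc, j) else 0) + p (E a, j)) :=
          Finset.sum_congr rfl fun a _ => hqeq a j
      _ = p (c.castSucc, j) + ∑ a, p (E a, j) := by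
          rw [Finset.sum_add_distrib, Finset.sum_ite_eq' Finset.univ c]
          simp
  -- assemble
  have hMI : MIfin p - MIfin q
      = Gg (∑ j, ν1 j) (∑ j, ν2 j) - ∑ j, Gg (ν1 j) (ν2 j) := by
    unfold MIfin
    rw [hY] at *
    have := hX
    have := hXY
    rw [hY]
    linarith [hX, hXY]
  have hν1pos : ∀ j ∈ Finset.univ, (0:ℝ) ≤ ν1 j := fun j _ => hp0 _
  have hν2pos : ∀ j ∈ Finset.univ, (0:ℝ) ≤ ν2 j := fun j _ => hp0 _
  have hsum_nonneg : 0 ≤ ∑ j, Gg (ν1 j) (ν2 j) :=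
    Finset.sum_nonneg fun j _ => Gg_nonneg (hp0 _) (hp0 _)
  have hsum_le : ∑ j, Gg (ν1 j) (ν2 j) ≤ Gg (∑ j, ν1 j) (∑ j, ν2 j) :=
    Gg_sum Finset.univ ν1 ν2 hν1pos hν2pos
  have hGbin : Gg (∑ j, ν1 j) (∑ j, ν2 j)
      = (∑ j, ν1 j + ∑ j, ν2 j) * Real.binEntropy ((∑ j, ν1 j) / (∑ j, ν1 j + ∑ j, ν2 j)) :=
    Gg_binEntropy (Finset.sum_nonneg fun j _ => hp0 _) (Finset.sum_nonneg fun j _ => hp0 _)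
  rw [hMI]
  rw [abs_le]
  constructor
  · rw [← hGbin]; linarith
  · rw [← hGbin]; linarith
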